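/- Assume ℓ_{0,1} > 0. Then the charging unit price λ_e is (strictly) increasing on (0, ∞) if and only if ∑_{t=1}^T η_t ℓ_{0,t}^n ≤ n · η_1 ℓ_{0,1}^{n−1} · ∑_{t=1}^T ℓ_{0,t} (equivalently, with ℓ̃_{0,t} = ℓ_{0,t}/ℓ_{0,1} and η̃_t = η_t/η_1, if and only if (∑_t η̃_t ℓ̃_{0,t}^n)/(∑_t ℓ̃_{0,t}) ≤ n). -/

import Mathlib

open Finset

/-- Total electricity cost of a charging profile `ℓe` over time slots `1,…,T`,
with cost functions `f_t(ℓ) = η_t ℓ^n`. -/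
noncomputable def chargCost (T : ℕ) (n : ℝ) (η ℓ0 ℓe : ℕ → ℝ) : ℝ :=
  ∑ t ∈ Finset.Icc 1 T, η t * (ℓ0 t + ℓe t) ^ n

/-- Feasibility of a charging profile: nonnegative, and summing to the charging need `Le`. -/
def ChargFeasible (T : ℕ) (Le : ℝ) (ℓe : ℕ → ℝ) : Prop :=
  (∀ t ∈ Finset.Icc 1 T, 0 ≤ ℓe t) ∧ ∑ t ∈ Finset.Icc 1 T, ℓe t = Le

/-- Optimal charging cost `V(L_e)`. -/
noncomputable def Vopt (T : ℕ) (n : ℝ) (η ℓ0 : ℕ → ℝ) (Le : ℝ) : ℝ :=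
  sInf {c | ∃ ℓe, ChargFeasible T Le ℓe ∧ chargCost T n η ℓ0 ℓe = c}

/-- Cumulative nonflexible load `α_t = ∑_{s=1}^t ℓ_{0,s}`. -/
noncomputable def alphaC (ℓ0 : ℕ → ℝ) (t : ℕ) : ℝ := ∑ s ∈ Finset.Icc 1 t, ℓ0 s

/-- Cost of the nonflexible load after time `t`: `β_t = ∑_{s=t+1}^T f_s(ℓ_{0,s})`. -/
noncomputable def betaC (T : ℕ) (n : ℝ) (η ℓ0 : ℕ → ℝ) (t : ℕ) : ℝ :=
  ∑ s ∈ Finset.Icc (t + 1) T, η s * ℓ0 s ^ n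

/-- Energy thresholds `L_e^{(t)}` (for `0 ≤ t ≤ T-1`, with `L_e^{(0)} = 0`). -/
noncomputable def Lth (n : ℝ) (η ℓ0 : ℕ → ℝ) (t : ℕ) : ℝ :=
  if t = 0 then 0
  else (∑ s ∈ Finset.Icc 1 t, (η (t + 1) / η s) ^ (1 / (n - 1))) * ℓ0 (t + 1) - alphaC ℓ0 t

/-- Charging unit price `λ_e(L_e) = V(L_e) / (L_e + α_T)`. -/
noncomputable def lamE (T : ℕ) (n : ℝ) (η ℓ0 : ℕ → ℝ) (Le : ℝ) : ℝ :=
  Vopt T n η ℓ0 Le / (Le + alphaC ℓ0 T)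

/-- Prop. 2: for `ℓ_{0,1} > 0`, the charging unit price `λ_e` is
(strictly) increasing on `(0, ∞)` if and only if
`∑_t η_t ℓ_{0,t}^n ≤ n · η_1 ℓ_{0,1}^{n-1} · ∑_t ℓ_{0,t}`. -/

lemma bernTangent {a x n : ℝ} (ha : 0 ≤ a) (hx : 0 ≤ x) (hn : (2:ℝ) ≤ n) :
    a ^ n + n * a ^ (n - 1) * x ≤ (a + x) ^ n := by
  rcases eq_or_lt_of_le ha with h | h
  · rw [← h, Real.zero_rpow (by linarith), Real.zero_rpow (by linarith : n - 1 ≠ 0), zero_add]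
    simpa using Real.rpow_nonneg hx n
  · have h1 : (1:ℝ) ≤ n := by linarith
    have hs : (-1:ℝ) ≤ x / a := by
      have := div_nonneg hx h.le; linarith
    have key := one_add_mul_self_le_rpow_one_add hs h1
    have hax : a + x = a * (1 + x / a) := by field_simp
    calc a ^ n + n * a ^ (n - 1) * x = a ^ n * (1 + n * (x / a)) := by
          rw [Real.rpow_sub_one h.ne']; field_simp
      _ ≤ a ^ n * (1 + x / a) ^ n :=
          mul_le_mul_of_nonneg_left key (Real.rpow_nonneg h.le n)
      _ = (a + x) ^ n := by
          rw [hax, Real.mul_rpow h.le (by positivity)]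

lemma bernTangentStrict {a x n : ℝ} (ha : 0 ≤ a) (hx : 0 < x) (hn : (2:ℝ) ≤ n) :
    a ^ n + n * a ^ (n - 1) * x < (a + x) ^ n := by
  rcases eq_or_lt_of_le ha with h | h
  · rw [← h, Real.zero_rpow (by linarith), Real.zero_rpow (by linarith : n - 1 ≠ 0), zero_add]
    simpa using Real.rpow_pos_of_pos hx n
  · have h1 : (1:ℝ) < n := by linarith
    have hs : (-1:ℝ) ≤ x / a := by
      have := div_nonneg hx.le h.le; linarith
    have hs' : x / a ≠ 0 := by positivity
    have key := one_add_mul_self_lt_rpow_one_add hs hs' h1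
    have hax : a + x = a * (1 + x / a) := by field_simp
    calc a ^ n + n * a ^ (n - 1) * x = a ^ n * (1 + n * (x / a)) := by
          rw [Real.rpow_sub_one h.ne']; field_simp
      _ < a ^ n * (1 + x / a) ^ n :=
          (mul_lt_mul_iff_right₀ (Real.rpow_pos_of_pos h n)).2 key
      _ = (a + x) ^ n := by
          rw [hax, Real.mul_rpow h.le (by positivity)]

lemma bernUpper {a x n : ℝ} (ha : 0 ≤ a) (hx : 0 ≤ x) (hn : (2:ℝ) ≤ n) :
    (a + x) ^ n ≤ a ^ n + n * (a + x) ^ (n - 1) * x := by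
  rcases eq_or_lt_of_le hx with h | h
  · rw [← h]; simp
  · have hb : 0 < a + x := by linarith
    have h1 : (1:ℝ) ≤ n := by linarith
    have hs : (-1:ℝ) ≤ -x / (a + x) := by
      rw [neg_div, neg_le_neg_iff]
      exact (div_le_one hb).2 (by linarith)
    have key := one_add_mul_self_le_rpow_one_add hs h1
    have hax : 1 + -x / (a + x) = a / (a + x) := by field_simp; ring
    rw [hax, Real.div_rpow ha hb.le] at key
    have h2 : (a + x) ^ n * (1 + n * (-x / (a + x))) ≤ a ^ n := by
      rw [mul_comm]
      calc (1 + n * (-x / (a + x))) * (a + x) ^ n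
          ≤ a ^ n / (a + x) ^ n * (a + x) ^ n :=
            mul_le_mul_of_nonneg_right key (Real.rpow_nonneg hb.le n)
        _ = a ^ n := by field_simp
    have h3 : (a + x) ^ n * (1 + n * (-x / (a + x)))
        = (a + x) ^ n - n * (a + x) ^ (n - 1) * x := by
      rw [Real.rpow_sub_one hb.ne']; field_simp; ring
    linarith [h3 ▸ h2]

lemma feasSet_nonempty (T : ℕ) (n : ℝ) (η ℓ0 : ℕ → ℝ) (hT : 1 ≤ T) {L : ℝ} (hL : 0 ≤ L) :
    {c | ∃ ℓe, ChargFeasible T L ℓe ∧ chargCost T n η ℓ0 ℓe = c}.Nonempty := by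
  refine ⟨_, (fun t => if t = 1 then L else 0), ⟨fun t _ => by dsimp; split <;> simp [hL], ?_⟩, rfl⟩
  rw [Finset.sum_ite_eq' (Finset.Icc 1 T) 1 (fun _ => L)]
  simp [Finset.mem_Icc, hT]

lemma feasSet_bddBelow (T : ℕ) (n : ℝ) (η ℓ0 : ℕ → ℝ)
    (hη : ∀ t ∈ Finset.Icc 1 T, 0 < η t) (hℓ0 : ∀ t ∈ Finset.Icc 1 T, 0 ≤ ℓ0 t) (L : ℝ) :
    BddBelow {c | ∃ ℓe, ChargFeasible T L ℓe ∧ chargCost T n η ℓ0 ℓe = c} := by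
  refine ⟨0, ?_⟩
  rintro c ⟨ℓe, ⟨hpos, -⟩, rfl⟩
  exact Finset.sum_nonneg fun t ht => mul_nonneg (hη t ht).le
    (Real.rpow_nonneg (add_nonneg (hℓ0 t ht) (hpos t ht)) n)

lemma Vopt_upper (T : ℕ) (n : ℝ) (η ℓ0 : ℕ → ℝ) (hT : 1 ≤ T)
    (hη : ∀ t ∈ Finset.Icc 1 T, 0 < η t) (hℓ0 : ∀ t ∈ Finset.Icc 1 T, 0 ≤ ℓ0 t)
    {L : ℝ} (hL : 0 ≤ L) :
    Vopt T n η ℓ0 L ≤ (∑ t ∈ Finset.Icc 1 T, η t * ℓ0 t ^ n)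
      + η 1 * ((ℓ0 1 + L) ^ n - ℓ0 1 ^ n) := by
  have h1T : 1 ∈ Finset.Icc 1 T := by simp [Finset.mem_Icc, hT]
  have hmem : chargCost T n η ℓ0 (fun t => if t = 1 then L else 0) ∈
      {c | ∃ ℓe, ChargFeasible T L ℓe ∧ chargCost T n η ℓ0 ℓe = c} := by
    refine ⟨_, ⟨fun t _ => by by_cases ht : t = 1 <;> simp [ht, hL], ?_⟩, rfl⟩
    rw [Finset.sum_ite_eq' (Finset.Icc 1 T) 1 (fun _ => L)]
    simp [Finset.mem_Icc, hT]
  refine (csInf_le (feasSet_bddBelow T n η ℓ0 hη hℓ0 L) hmem).trans ?_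
  unfold chargCost
  rw [← Finset.add_sum_erase _ _ h1T, ← Finset.add_sum_erase _ (fun t => η t * ℓ0 t ^ n) h1T]
  have : ∑ t ∈ (Finset.Icc 1 T).erase 1, η t * (ℓ0 t + if t = 1 then L else 0) ^ n
      = ∑ t ∈ (Finset.Icc 1 T).erase 1, η t * ℓ0 t ^ n := by
    apply Finset.sum_congr rfl
    intro t ht
    rw [if_neg (Finset.ne_of_mem_erase ht)]
    ring_nf
  rw [this]
  norm_num
  linarith [le_refl (0:ℝ)]

lemma tangent_shift {a m x n : ℝ} (ha : 0 ≤ a) (hm : 0 ≤ m) (hmx : m ≤ x) (hn : (2:ℝ) ≤ n) :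
    a ^ n + n * a ^ (n - 1) * x + ((a + m) ^ n - a ^ n - n * a ^ (n - 1) * m)
      ≤ (a + x) ^ n := by
  have h1 : (a + m) ^ n + n * (a + m) ^ (n - 1) * (x - m) ≤ (a + m + (x - m)) ^ n :=
    bernTangent (by linarith) (by linarith) hn
  rw [show a + m + (x - m) = a + x by ring] at h1
  have h2 : a ^ (n - 1) ≤ (a + m) ^ (n - 1) :=
    Real.rpow_le_rpow ha (by linarith) (by linarith)
  nlinarith [mul_le_mul_of_nonneg_right h2 (by linarith : (0:ℝ) ≤ x - m),
    (by linarith : (0:ℝ) ≤ n)]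

lemma Vopt_lower_strict (T : ℕ) (n : ℝ) (η ℓ0 : ℕ → ℝ) (hT : 1 ≤ T) (hn : (2:ℝ) ≤ n)
    (hη : ∀ t ∈ Finset.Icc 1 T, 0 < η t) (hℓ0 : ∀ t ∈ Finset.Icc 1 T, 0 ≤ ℓ0 t)
    (hord : ∀ s t : ℕ, 1 ≤ s → s ≤ t → t ≤ T →
      η s * ℓ0 s ^ (n - 1) ≤ η t * ℓ0 t ^ (n - 1))
    {L : ℝ} (hL : 0 < L) :
    ∃ g, 0 < g ∧ (∑ t ∈ Finset.Icc 1 T, η t * ℓ0 t ^ n)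
      + n * (η 1 * ℓ0 1 ^ (n - 1)) * L + g ≤ Vopt T n η ℓ0 L := by
  have h1T : 1 ∈ Finset.Icc 1 T := by simp [Finset.mem_Icc, hT]
  have hTpos : (0:ℝ) < T := by exact_mod_cast Nat.lt_of_lt_of_le Nat.zero_lt_one hT
  set m : ℝ := L / T with hm_def
  have hm : 0 < m := div_pos hL hTpos
  set δ : ℕ → ℝ := fun t => η t * ((ℓ0 t + m) ^ n - ℓ0 t ^ n - n * ℓ0 t ^ (n - 1) * m)
    with hδ_def
  obtain ⟨t0, ht0mem, ht0min⟩ :=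
    Finset.exists_min_image (Finset.Icc 1 T) δ ⟨1, h1T⟩
  refine ⟨δ t0, ?_, ?_⟩
  · have := bernTangentStrict (hℓ0 t0 ht0mem) hm hn
    exact mul_pos (hη t0 ht0mem) (by linarith)
  · apply le_csInf (feasSet_nonempty T n η ℓ0 hT hL.le)
    rintro C ⟨x, ⟨hx0, hxs⟩, rfl⟩
    obtain ⟨t1, ht1, hxt1⟩ : ∃ t ∈ Finset.Icc 1 T, m ≤ x t := by
      apply Finset.exists_le_of_sum_le ⟨1, h1T⟩
      rw [Finset.sum_const, hxs, Nat.card_Icc]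
      simp only [nsmul_eq_mul]
      rw [hm_def]
      have : ((T + 1 - 1 : ℕ) : ℝ) = (T : ℝ) := by norm_num
      rw [this, mul_div_cancel₀ _ (ne_of_gt hTpos)]
    -- termwise bounds
    have main : ∀ t ∈ Finset.Icc 1 T,
        η t * ℓ0 t ^ n + n * (η 1 * ℓ0 1 ^ (n - 1)) * x t
          + (if t = t1 then δ t0 else 0) ≤ η t * (ℓ0 t + x t) ^ n := by
      intro t ht
      have hxt : 0 ≤ x t := hx0 t ht
      have hat : 0 ≤ ℓ0 t := hℓ0 t ht
      have hmem := Finset.mem_Icc.1 ht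
      have hordt : η 1 * ℓ0 1 ^ (n - 1) ≤ η t * ℓ0 t ^ (n - 1) :=
        hord 1 t le_rfl hmem.1 hmem.2
      have hxcoef : n * (η 1 * ℓ0 1 ^ (n - 1)) * x t ≤ n * (η t * ℓ0 t ^ (n - 1)) * x t := by
        have hn0 : (0:ℝ) ≤ n := by linarith
        nlinarith [mul_le_mul_of_nonneg_right hordt hxt]
      by_cases het : t = t1
      · subst het
        have hts := tangent_shift hat hm.le hxt1 hn
        have := mul_le_mul_of_nonneg_left hts (hη t ht).le
        have hδle : δ t0 ≤ η t * ((ℓ0 t + m) ^ n - ℓ0 t ^ n - n * ℓ0 t ^ (n - 1) * m) :=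
          ht0min t ht
        norm_num
        nlinarith [this]
      · simp only [if_neg het, add_zero]
        have hbt := bernTangent hat hxt hn
        have := mul_le_mul_of_nonneg_left hbt (hη t ht).le
        nlinarith [this]
    have hsum := Finset.sum_le_sum main
    rw [Finset.sum_add_distrib, Finset.sum_add_distrib,
      Finset.sum_ite_eq' (Finset.Icc 1 T) t1 (fun _ => δ t0), if_pos ht1,
      ← Finset.mul_sum, hxs] at hsum
    exact hsum

lemma Vopt_convex (T : ℕ) (n : ℝ) (η ℓ0 : ℕ → ℝ) (hT : 1 ≤ T) (hn : (2:ℝ) ≤ n)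
    (hη : ∀ t ∈ Finset.Icc 1 T, 0 < η t) (hℓ0 : ∀ t ∈ Finset.Icc 1 T, 0 ≤ ℓ0 t)
    {L θ : ℝ} (hL : 0 < L) (hθ0 : 0 < θ) (hθ1 : θ < 1) :
    Vopt T n η ℓ0 (θ * L) ≤ (1 - θ) * (∑ t ∈ Finset.Icc 1 T, η t * ℓ0 t ^ n)
      + θ * Vopt T n η ℓ0 L := by
  set V0 := ∑ t ∈ Finset.Icc 1 T, η t * ℓ0 t ^ n with hV0
  have step : ∀ C ∈ {c | ∃ ℓe, ChargFeasible T L ℓe ∧ chargCost T n η ℓ0 ℓe = c},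
      Vopt T n η ℓ0 (θ * L) ≤ (1 - θ) * V0 + θ * C := by
    rintro C ⟨x, ⟨hx0, hxs⟩, rfl⟩
    have hfeas : ChargFeasible T (θ * L) (fun t => θ * x t) :=
      ⟨fun t ht => mul_nonneg hθ0.le (hx0 t ht), by rw [← Finset.mul_sum, hxs]⟩
    have h1 : Vopt T n η ℓ0 (θ * L) ≤ chargCost T n η ℓ0 (fun t => θ * x t) :=
      csInf_le (feasSet_bddBelow T n η ℓ0 hη hℓ0 (θ * L)) ⟨_, hfeas, rfl⟩
    have h2 : chargCost T n η ℓ0 (fun t => θ * x t)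
        ≤ (1 - θ) * V0 + θ * chargCost T n η ℓ0 x := by
      unfold chargCost
      rw [hV0, Finset.mul_sum, Finset.mul_sum, ← Finset.sum_add_distrib]
      apply Finset.sum_le_sum
      intro t ht
      have hcx := (convexOn_rpow (by linarith : (1:ℝ) ≤ n)).2
        (Set.mem_Ici.2 (hℓ0 t ht))
        (Set.mem_Ici.2 (add_nonneg (hℓ0 t ht) (hx0 t ht)))
        (by linarith : (0:ℝ) ≤ 1 - θ) hθ0.le (by ring)
      simp only [smul_eq_mul] at hcx
      rw [show (1 - θ) * ℓ0 t + θ * (ℓ0 t + x t) = ℓ0 t + θ * x t by ring] at hcx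
      nlinarith [mul_le_mul_of_nonneg_left hcx (hη t ht).le]
    linarith
  have hne := feasSet_nonempty T n η ℓ0 hT hL.le
  have hle : (Vopt T n η ℓ0 (θ * L) - (1 - θ) * V0) / θ
      ≤ sInf {c | ∃ ℓe, ChargFeasible T L ℓe ∧ chargCost T n η ℓ0 ℓe = c} := by
    apply le_csInf hne
    intro c hc
    rw [div_le_iff₀ hθ0]
    linarith [step c hc]
  rw [div_le_iff₀ hθ0] at hle
  have heq : Vopt T n η ℓ0 L
      = sInf {c | ∃ ℓe, ChargFeasible T L ℓe ∧ chargCost T n η ℓ0 ℓe = c} := rfl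
  rw [← heq] at hle
  linarith [hle]


theorem lamE_strictMono_iff
    (T : ℕ) (n : ℝ) (η ℓ0 : ℕ → ℝ)
    (hT : 2 ≤ T) (hn : (2 : ℝ) ≤ n)
    (hη : ∀ t ∈ Finset.Icc 1 T, 0 < η t)
    (hℓ0 : ∀ t ∈ Finset.Icc 1 T, 0 ≤ ℓ0 t)
    (hord : ∀ s t : ℕ, 1 ≤ s → s ≤ t → t ≤ T →
      η s * ℓ0 s ^ (n - 1) ≤ η t * ℓ0 t ^ (n - 1))
    (h01 : 0 < ℓ0 1) :
    StrictMonoOn (lamE T n η ℓ0) (Set.Ioi 0) ↔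
      ∑ t ∈ Finset.Icc 1 T, η t * ℓ0 t ^ n ≤
        n * (η 1 * ℓ0 1 ^ (n - 1)) * ∑ t ∈ Finset.Icc 1 T, ℓ0 t := by
  have hT1 : 1 ≤ T := le_trans one_le_two hT
  have h1T : 1 ∈ Finset.Icc 1 T := by simp [Finset.mem_Icc, hT1]
  set V0 := ∑ t ∈ Finset.Icc 1 T, η t * ℓ0 t ^ n with hV0
  set c := n * (η 1 * ℓ0 1 ^ (n - 1)) with hc_def
  set A := alphaC ℓ0 T with hA_def
  have hAsum : A = ∑ t ∈ Finset.Icc 1 T, ℓ0 t := rfl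
  have hA : 0 < A := by
    rw [hAsum]
    calc (0:ℝ) < ℓ0 1 := h01
      _ ≤ _ := Finset.single_le_sum (fun t ht => hℓ0 t ht) h1T
  have hc : 0 < c := by
    rw [hc_def]
    exact mul_pos (by linarith : (0:ℝ) < n)
      (mul_pos (hη 1 h1T) (Real.rpow_pos_of_pos h01 _))
  constructor
  · -- StrictMonoOn → condition
    intro hmono
    by_contra hcond
    push_neg at hcond
    rw [← hAsum] at hcond   -- hcond : c * A < V0
    -- define K and ψ
    set K : ℝ → ℝ := fun L => n * (η 1 * (ℓ0 1 + L) ^ (n - 1)) with hK_def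
    set ψ : ℝ → ℝ := fun L => V0 / 2 + (c - K L) * (L / 2) + A * (c / 2 - K L) with hψ_def
    have hK0 : K 0 = c := by simp [hK_def, hc_def]
    have hψ0 : 0 < ψ 0 := by
      simp only [hψ_def, hK0]
      nlinarith [hcond]
    have hKc : ContinuousAt K 0 := by
      have hf : ContinuousAt (fun L : ℝ => (ℓ0 1 + L) ^ (n - 1)) 0 := by
        have hb : ContinuousAt (fun L : ℝ => ℓ0 1 + L) 0 := by fun_prop
        have := Real.continuousAt_rpow_const (ℓ0 1 + 0) (n - 1)
          (Or.inl (by simpa using h01.ne'))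
        exact this.comp hb
      rw [hK_def]
      exact continuousAt_const.mul (continuousAt_const.mul hf)
    have hψc : ContinuousAt ψ 0 := by
      rw [hψ_def]
      exact (continuousAt_const.add
        (((continuousAt_const.sub hKc)).mul (continuousAt_id.div_const 2))).add
        (continuousAt_const.mul (continuousAt_const.sub hKc))
    have hev : ∀ᶠ L in nhdsWithin (0:ℝ) (Set.Ioi 0), 0 < ψ L :=
      (hψc.tendsto.eventually (eventually_gt_nhds hψ0)).filter_mono nhdsWithin_le_nhds
    have hmemIoi : ∀ᶠ L in nhdsWithin (0:ℝ) (Set.Ioi 0), L ∈ Set.Ioi (0:ℝ) :=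
      eventually_mem_nhdsWithin
    obtain ⟨L2, hψL2, hL2mem⟩ := (hev.and hmemIoi).exists
    have hL2 : 0 < L2 := hL2mem
    set L1 := L2 / 2 with hL1_def
    have hL1 : 0 < L1 := by positivity
    -- lower bound at L1
    obtain ⟨g1, hg1, hlow⟩ := Vopt_lower_strict T n η ℓ0 hT1 hn hη hℓ0 hord hL1
    rw [← hV0, ← hc_def] at hlow
    -- upper bound at L2
    have hup0 := Vopt_upper T n η ℓ0 hT1 hη hℓ0 hL2.le
    rw [← hV0] at hup0
    have hup : Vopt T n η ℓ0 L2 ≤ V0 + K L2 * L2 := by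
      have hb := bernUpper h01.le hL2.le hn
      have := mul_le_mul_of_nonneg_left hb (hη 1 h1T).le
      have hKval : K L2 = n * (η 1 * (ℓ0 1 + L2) ^ (n - 1)) := rfl
      nlinarith [this]
    -- cross inequality
    have hcross : (V0 + K L2 * L2) * (L1 + A) ≤ (V0 + c * L1) * (L2 + A) := by
      have hψval : ψ L2 = V0 / 2 + (c - K L2) * (L2 / 2) + A * (c / 2 - K L2) := rfl
      have hid : (V0 + c * L1) * (L2 + A) - (V0 + K L2 * L2) * (L1 + A)
          = L2 * ψ L2 := by rw [hψval, hL1_def]; ring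
      have := mul_pos hL2 hψL2
      linarith
    -- now compare lamE
    have hd1 : 0 < L1 + A := by linarith
    have hd2 : 0 < L2 + A := by linarith
    have hlam : lamE T n η ℓ0 L2 ≤ lamE T n η ℓ0 L1 := by
      unfold lamE
      rw [← hA_def, div_le_div_iff₀ hd2 hd1]
      calc Vopt T n η ℓ0 L2 * (L1 + A) ≤ (V0 + K L2 * L2) * (L1 + A) :=
            mul_le_mul_of_nonneg_right hup hd1.le
        _ ≤ (V0 + c * L1) * (L2 + A) := hcross
        _ ≤ Vopt T n η ℓ0 L1 * (L2 + A) :=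
            mul_le_mul_of_nonneg_right (by linarith) hd2.le
    have := hmono (Set.mem_Ioi.2 hL1) (Set.mem_Ioi.2 hL2) (by rw [hL1_def]; linarith)
    linarith
  · -- condition → StrictMonoOn
    intro hcond
    rw [← hAsum] at hcond   -- hcond : V0 ≤ c * A
    intro L1 hL1 L2 hL2 h12
    rw [Set.mem_Ioi] at hL1 hL2
    obtain ⟨g, hg, hVL2⟩ := Vopt_lower_strict T n η ℓ0 hT1 hn hη hℓ0 hord hL2
    rw [← hV0, ← hc_def] at hVL2
    have key : V0 * (L2 + A) < A * Vopt T n η ℓ0 L2 := by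
      nlinarith [mul_le_mul_of_nonneg_left hVL2 hA.le,
        mul_le_mul_of_nonneg_right hcond hL2.le, mul_pos hA hg]
    set θ := L1 / L2 with hθ_def
    have hθ0 : 0 < θ := div_pos hL1 hL2
    have hθ1 : θ < 1 := (div_lt_one hL2).2 h12
    have hθL : θ * L2 = L1 := by
      rw [hθ_def]; field_simp
    have hconv := Vopt_convex T n η ℓ0 hT1 hn hη hℓ0 hL2 hθ0 hθ1
    rw [hθL, ← hV0] at hconv
    have hd1 : 0 < L1 + A := by linarith
    have hd2 : 0 < L2 + A := by linarith
    unfold lamE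
    rw [← hA_def, div_lt_div_iff₀ hd1 hd2]
    have hV0n : 0 ≤ V0 := by
      rw [hV0]
      exact Finset.sum_nonneg fun t ht => mul_nonneg (hη t ht).le
        (Real.rpow_nonneg (hℓ0 t ht) n)
    have hu0 : 0 < Vopt T n η ℓ0 L2 := by nlinarith [mul_pos hc hL2]
    nlinarith [mul_le_mul_of_nonneg_right hconv hd2.le,
      mul_lt_mul_of_pos_left key (by linarith : (0:ℝ) < 1 - θ),
      mul_pos hu0 hL2, hθL]
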